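/- For every nonnegative integer n, ∑_{k=0}^{n} k⁴·H_{n-k}² = (n(n+1)(2n+1)(3n²+3n−1)/30)·H_{n+1}² − (1/900)(2n+1)(411n⁴+1002n³+679n²+28n−30)·H_{n+1} + (1/54000)(n+1)(72114n⁴+103491n³+46129n²+1466n−1800). -/
import Mathlib

open Finset

/-- The harmonic number `H n = ∑_{k=1}^n 1/k`. -/
def H (n : ℕ) : ℚ := ∑ k ∈ Finset.range n, (1 : ℚ) / ((k : ℚ) + 1)

/-- The generalized harmonic number `H n ^ (m) = ∑_{k=1}^n 1/k^m`. -/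
def Hgen (m n : ℕ) : ℚ := ∑ k ∈ Finset.range n, (1 : ℚ) / ((k : ℚ) + 1) ^ m

lemma Hsucc (n : ℕ) : H (n + 1) = H n + 1 / ((n : ℚ) + 1) := by
  simp [H, Finset.sum_range_succ]

lemma L0 (n : ℕ) : ∑ j ∈ Finset.range (n + 1), (H j) ^ 2 =
    ((n : ℚ) + 1) * (H (n+1))^2 - (2*(n:ℚ)+3) * H (n+1) + 2*(n:ℚ)+2 := by
  induction n with
  | zero => norm_num [H, Hsucc]
  | succ n ih =>
    rw [Finset.sum_range_succ, ih, show n+1+1 = (n+1)+1 from rfl, Hsucc (n+1)]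
    push_cast
    have h2 : ((n:ℚ)+1+1) ≠ 0 := by positivity
    field_simp
    ring

lemma L1 (n : ℕ) : ∑ j ∈ Finset.range (n + 1), (j : ℚ) * (H j) ^ 2 =
    ((n:ℚ)/2 + (n:ℚ)^2/2) * (H (n+1))^2
      + (1/2 - (n:ℚ)/2 - (n:ℚ)^2/2) * H (n+1)
      + (-1/2 - (n:ℚ)/4 + (n:ℚ)^2/4) := by
  induction n with
  | zero => norm_num [H, Hsucc]
  | succ n ih =>
    rw [Finset.sum_range_succ, ih, show n+1+1 = (n+1)+1 from rfl, Hsucc (n+1)]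
    push_cast
    have h2 : ((n:ℚ)+1+1) ≠ 0 := by positivity
    field_simp
    ring

lemma L2 (n : ℕ) : ∑ j ∈ Finset.range (n + 1), (j : ℚ)^2 * (H j) ^ 2 =
    ((n:ℚ)/6 + (n:ℚ)^2/2 + (n:ℚ)^3/3) * (H (n+1))^2
      + (-1/6 - 5*(n:ℚ)/18 - (n:ℚ)^2/2 - 2*(n:ℚ)^3/9) * H (n+1)
      + (1/6 + 19*(n:ℚ)/108 + (n:ℚ)^2/12 + 2*(n:ℚ)^3/27) := by
  induction n with
  | zero => norm_num [H, Hsucc]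
  | succ n ih =>
    rw [Finset.sum_range_succ, ih, show n+1+1 = (n+1)+1 from rfl, Hsucc (n+1)]
    push_cast
    have h2 : ((n:ℚ)+1+1) ≠ 0 := by positivity
    field_simp
    ring

lemma L3 (n : ℕ) : ∑ j ∈ Finset.range (n + 1), (j : ℚ)^3 * (H j) ^ 2 =
    ((n:ℚ)^2/4 + (n:ℚ)^3/2 + (n:ℚ)^4/4) * (H (n+1))^2
      + (-(n:ℚ)/12 - 3*(n:ℚ)^2/8 - 5*(n:ℚ)^3/12 - (n:ℚ)^4/8) * H (n+1)
      + (7*(n:ℚ)/144 + 3*(n:ℚ)^2/32 + 11*(n:ℚ)^3/144 + (n:ℚ)^4/32) := by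
  induction n with
  | zero => norm_num [H, Hsucc]
  | succ n ih =>
    rw [Finset.sum_range_succ, ih, show n+1+1 = (n+1)+1 from rfl, Hsucc (n+1)]
    push_cast
    have h2 : ((n:ℚ)+1+1) ≠ 0 := by positivity
    field_simp
    ring

lemma L4 (n : ℕ) : ∑ j ∈ Finset.range (n + 1), (j : ℚ)^4 * (H j) ^ 2 =
    (-(n:ℚ)/30 + (n:ℚ)^3/3 + (n:ℚ)^4/2 + (n:ℚ)^5/5) * (H (n+1))^2
      + (1/30 + 8*(n:ℚ)/225 - 3*(n:ℚ)^2/20 - 41*(n:ℚ)^3/90 - 7*(n:ℚ)^4/20 - 2*(n:ℚ)^5/25) * H (n+1)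
      + (-1/30 - 167*(n:ℚ)/27000 + 91*(n:ℚ)^2/1200 + 487*(n:ℚ)^3/5400 + 23*(n:ℚ)^4/400 + 2*(n:ℚ)^5/125) := by
  induction n with
  | zero => norm_num [H, Hsucc]
  | succ n ih =>
    rw [Finset.sum_range_succ, ih, show n+1+1 = (n+1)+1 from rfl, Hsucc (n+1)]
    push_cast
    have h2 : ((n:ℚ)+1+1) ≠ 0 := by positivity
    field_simp
    ring

theorem stmt17 (n : ℕ) :
    ∑ k ∈ Finset.range (n + 1), (k : ℚ) ^ 4 * (H (n - k)) ^ 2 =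
      ((n : ℚ) * ((n : ℚ) + 1) * (2 * (n : ℚ) + 1) * (3 * (n : ℚ) ^ 2 + 3 * (n : ℚ) - 1) / 30) * (H (n + 1)) ^ 2
        - (1 / 900) * (2 * (n : ℚ) + 1) *
            (411 * (n : ℚ) ^ 4 + 1002 * (n : ℚ) ^ 3 + 679 * (n : ℚ) ^ 2 + 28 * (n : ℚ) - 30) * H (n + 1)
        + (1 / 54000) * ((n : ℚ) + 1) *
            (72114 * (n : ℚ) ^ 4 + 103491 * (n : ℚ) ^ 3 + 46129 * (n : ℚ) ^ 2 + 1466 * (n : ℚ) - 1800) := by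
  rw [← Finset.sum_range_reflect]
  have step : ∀ j ∈ Finset.range (n+1),
      ((↑(n + 1 - 1 - j) : ℚ)) ^ 4 * (H (n - (n + 1 - 1 - j))) ^ 2 =
      (n:ℚ)^4 * (H j)^2 - 4*(n:ℚ)^3 * ((j:ℚ) * (H j)^2)
        + 6*(n:ℚ)^2 * ((j:ℚ)^2 * (H j)^2) - 4*(n:ℚ) * ((j:ℚ)^3 * (H j)^2)
        + (j:ℚ)^4 * (H j)^2 := by
    intro j hj
    rw [Finset.mem_range] at hj
    have hjn : j ≤ n := Nat.lt_succ_iff.mp hj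
    have h1 : n + 1 - 1 - j = n - j := by omega
    have h2 : n - (n - j) = j := by omega
    rw [h1, h2, Nat.cast_sub hjn]
    ring
  rw [Finset.sum_congr rfl step]
  simp only [Finset.sum_add_distrib, Finset.sum_sub_distrib, ← Finset.mul_sum]
  rw [L0, L1, L2, L3, L4]
  ring
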